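/- In the group algebra of the weight lattice of osp(2,2n), suppose χ is an integral weight with (χ+ρ, ε+δ_j) = (χ+ρ, ε+δ_{j+1}) = 0 for some 1 ≤ j ≤ n−1. Then {K^{ε+δ_j}_χ} = −{K^{ε+δ_{j+1}}_{χ−ε−δ_{j+1}}}, where for a weight ν and odd positive root α, K^α_ν = e^{ν+ρ₀} Π_{β ∈ R₁⁺ \ {α}} (1 − e^{−β}), and {·} denotes alternation over the Weyl group W₀ = S_n ⋉ (ℤ/2)^n acting by permutations and sign changes of the δ_i. -/

import Mathlib

/-- The integral weight lattice of `osp(2,2n)`: coefficients of `ε` and of `δ₁, …, δ_n`. -/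
abbrev Wt (n : ℕ) : Type := ℤ × (Fin n → ℤ)

/-- The group algebra of the weight lattice over `ℂ`. -/
abbrev GA (n : ℕ) : Type := AddMonoidAlgebra ℂ (Wt n)

/-- `e^v` in the group algebra. -/
noncomputable def eWt (n : ℕ) (v : Wt n) : GA n := AddMonoidAlgebra.single v 1

/-- The weight `ε`. -/
def eps (n : ℕ) : Wt n := (1, 0)

/-- The weight `δ_i` (indexing `δ_{i+1}` by `i : Fin n`). -/
def delta (n : ℕ) (i : Fin n) : Wt n := (0, fun r => if r = i then 1 else 0)

/-- `ρ₀ = Σ_{i=1}^n (n+1−i) δ_i`. -/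
def rho0 (n : ℕ) : Wt n := (0, fun i => (n : ℤ) - (i : ℤ))

/-- `ρ = ρ₀ − ρ₁ = ρ₀ − n ε`. -/
def rho (n : ℕ) : Wt n := (-(n : ℤ), fun i => (n : ℤ) - (i : ℤ))

/-- The pairing `(v, ε + δ_i)` for the form `(ε,ε)=1`, `(δ_i,δ_j)=−δ_{ij}`, `(ε,δ_i)=0`. -/
def pairPlus (n : ℕ) (v : Wt n) (i : Fin n) : ℤ := v.1 - v.2 i

/-- The pairing `(v, ε − δ_i)`. -/
def pairMinus (n : ℕ) (v : Wt n) (i : Fin n) : ℤ := v.1 + v.2 i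

/-- The odd positive root attached to `(i, s)`: `ε + δ_i` if `s = true`, `ε − δ_i` otherwise. -/
def oddRoot (n : ℕ) (a : Fin n × Bool) : Wt n :=
  if a.2 then eps n + delta n a.1 else eps n - delta n a.1

/-- The action of the Weyl group element `(σ, s) ∈ S_n ⋉ (ℤ/2)^n` on weights: it fixes `ε` and
permutes and changes signs of the `δ_i`. -/
def wAct (n : ℕ) (σ : Equiv.Perm (Fin n)) (s : Fin n → ℤˣ) (v : Wt n) : Wt n :=
  (v.1, fun i => (s i : ℤ) * v.2 (σ⁻¹ i))

/-- The alternation `{f} = Σ_{w ∈ W₀} sgn(w) · w(f)` over `W₀ = S_n ⋉ (ℤ/2)^n`. -/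
noncomputable def alt (n : ℕ) (f : GA n) : GA n :=
  ∑ σ : Equiv.Perm (Fin n), ∑ s : Fin n → ℤˣ,
    ((((Equiv.Perm.sign σ : ℤ) * ∏ i, (s i : ℤ) : ℤ) : ℂ)) •
      AddMonoidAlgebra.mapDomain (wAct n σ s) f

/-- `K^α_ν = e^{ν+ρ₀} Π_{β ∈ R₁⁺ \ {α}} (1 − e^{−β})`, with `α = oddRoot n a`. -/
noncomputable def Kal (n : ℕ) (χ : Wt n) (a : Fin n × Bool) : GA n :=
  eWt n (χ + rho0 n) *
    ∏ b ∈ (Finset.univ : Finset (Fin n × Bool)).erase a,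
      (1 - eWt n (-(oddRoot n b)))


lemma wAct_add (n : ℕ) (σ : Equiv.Perm (Fin n)) (s : Fin n → ℤˣ) (u v : Wt n) :
    wAct n σ s (u + v) = wAct n σ s u + wAct n σ s v := by
  refine Prod.ext rfl (funext fun i => ?_)
  show (s i : ℤ) * (u + v).2 (σ⁻¹ i) = (s i : ℤ) * u.2 (σ⁻¹ i) + (s i : ℤ) * v.2 (σ⁻¹ i)
  rw [Prod.snd_add, Pi.add_apply]; ring

lemma wAct_zero (n : ℕ) (σ : Equiv.Perm (Fin n)) (s : Fin n → ℤˣ) :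
    wAct n σ s 0 = 0 := by
  refine Prod.ext rfl (funext fun i => ?_)
  show (s i : ℤ) * (0 : Wt n).2 (σ⁻¹ i) = 0
  simp

lemma wAct_comp (n : ℕ) (σ τ : Equiv.Perm (Fin n)) (s t : Fin n → ℤˣ) (v : Wt n) :
    wAct n σ s (wAct n τ t v) = wAct n (σ * τ) (fun i => s i * t (σ⁻¹ i)) v := by
  refine Prod.ext rfl (funext fun i => ?_)
  show (s i : ℤ) * ((t (σ⁻¹ i) : ℤ) * v.2 (τ⁻¹ (σ⁻¹ i)))
      = ((s i * t (σ⁻¹ i) : ℤˣ) : ℤ) * v.2 ((σ * τ)⁻¹ i)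
  rw [mul_inv_rev, Equiv.Perm.mul_apply, Units.val_mul]; ring

lemma wAct_apply2 (n : ℕ) (τ : Equiv.Perm (Fin n)) (v : Wt n) (i : Fin n) :
    (wAct n τ 1 v).2 i = v.2 (τ⁻¹ i) := by
  show ((1 : Fin n → ℤˣ) i : ℤ) * v.2 (τ⁻¹ i) = _
  simp

lemma wAct_swap_fix (n : ℕ) (j j1 : Fin n) (v : Wt n) (hv : v.2 j = v.2 j1) :
    wAct n (Equiv.swap j j1) 1 v = v := by
  refine Prod.ext rfl (funext fun i => ?_)
  rw [wAct_apply2, Equiv.swap_inv]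
  rcases eq_or_ne i j with rfl | hij
  · rw [Equiv.swap_apply_left]; exact hv.symm
  rcases eq_or_ne i j1 with rfl | hij1
  · rw [Equiv.swap_apply_right]; exact hv
  · rw [Equiv.swap_apply_of_ne_of_ne hij hij1]

lemma wAct_delta (n : ℕ) (τ : Equiv.Perm (Fin n)) (i : Fin n) :
    wAct n τ 1 (delta n i) = delta n (τ i) := by
  refine Prod.ext rfl (funext fun r => ?_)
  rw [wAct_apply2]
  show (if τ⁻¹ r = i then (1:ℤ) else 0) = (if r = τ i then (1:ℤ) else 0)
  congr 1
  simp [Equiv.Perm.inv_eq_iff_eq, Equiv.symm_apply_eq]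

lemma wAct_eps (n : ℕ) (τ : Equiv.Perm (Fin n)) : wAct n τ 1 (eps n) = eps n := by
  refine Prod.ext rfl (funext fun i => ?_)
  rw [wAct_apply2]; rfl

lemma alt_add (n : ℕ) (f g : GA n) : alt n (f + g) = alt n f + alt n g := by
  unfold alt
  rw [← Finset.sum_add_distrib]
  refine Finset.sum_congr rfl fun σ _ => ?_
  rw [← Finset.sum_add_distrib]
  refine Finset.sum_congr rfl fun s _ => ?_
  rw [show AddMonoidAlgebra.mapDomain (wAct n σ s) (f + g)
      = AddMonoidAlgebra.mapDomain (wAct n σ s) f + AddMonoidAlgebra.mapDomain (wAct n σ s) g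
      from AddMonoidAlgebra.mapDomain_add _ _ _, smul_add]

set_option maxHeartbeats 2000000 in
lemma alt_swap (n : ℕ) (j j1 : Fin n) (h : j ≠ j1) (f : GA n) :
    alt n (AddMonoidAlgebra.mapDomain (wAct n (Equiv.swap j j1) 1) f) = - alt n f := by
  set τ := Equiv.swap j j1 with hτdef
  have hτ : Equiv.Perm.sign τ = -1 := Equiv.Perm.sign_swap h
  have key : ∀ (σ : Equiv.Perm (Fin n)) (s : Fin n → ℤˣ),
      AddMonoidAlgebra.mapDomain (wAct n σ s) (AddMonoidAlgebra.mapDomain (wAct n τ 1) f)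
        = AddMonoidAlgebra.mapDomain (wAct n (σ * τ) s) f := by
    intro σ s
    rw [show AddMonoidAlgebra.mapDomain (wAct n σ s) (AddMonoidAlgebra.mapDomain (wAct n τ 1) f)
        = AddMonoidAlgebra.mapDomain (wAct n σ s ∘ wAct n τ 1) f from by
      ext x; simp [Finsupp.mapDomain_comp]]
    congr 1
    funext v
    simp only [Function.comp_apply, wAct_comp, Pi.one_apply, mul_one]
  have step1 : alt n (AddMonoidAlgebra.mapDomain (wAct n τ 1) f)
      = ∑ σ : Equiv.Perm (Fin n), -(∑ s : Fin n → ℤˣ,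
          ((((Equiv.Perm.sign (σ * τ) : ℤ) * ∏ i, (s i : ℤ) : ℤ) : ℂ)) •
            AddMonoidAlgebra.mapDomain (wAct n (σ * τ) s) f) := by
    unfold alt
    refine Finset.sum_congr rfl fun σ _ => ?_
    rw [← Finset.sum_neg_distrib]
    refine Finset.sum_congr rfl fun s _ => ?_
    rw [key σ s, ← neg_smul]
    congr 1
    have hs : (Equiv.Perm.sign (σ * τ) : ℤ) = -(Equiv.Perm.sign σ : ℤ) := by
      rw [map_mul, hτ]; push_cast; ring
    rw [hs]; push_cast; ring
  rw [step1, Finset.sum_neg_distrib]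
  exact congrArg Neg.neg (Fintype.sum_equiv (Equiv.mulRight τ) _ _ (fun σ => rfl))

lemma alt_eq_zero_of_swap_fixed (n : ℕ) (j j1 : Fin n) (h : j ≠ j1) (f : GA n)
    (hf : AddMonoidAlgebra.mapDomain (wAct n (Equiv.swap j j1) 1) f = f) : alt n f = 0 := by
  have h2 := alt_swap n j j1 h f
  rw [hf] at h2
  have h3 : alt n f + alt n f = 0 := add_eq_zero_iff_eq_neg.mpr h2
  have h4 : (2 : ℂ) • alt n f = 0 := by rw [two_smul]; exact h3
  rcases smul_eq_zero.mp h4 with h5 | h5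
  · norm_num at h5
  · exact h5

lemma wAct_neg (n : ℕ) (σ : Equiv.Perm (Fin n)) (s : Fin n → ℤˣ) (v : Wt n) :
    wAct n σ s (-v) = -wAct n σ s v := by
  refine Prod.ext rfl (funext fun i => ?_)
  show (s i : ℤ) * (-v).2 (σ⁻¹ i) = -((s i : ℤ) * v.2 (σ⁻¹ i))
  rw [Prod.snd_neg, Pi.neg_apply]; ring

lemma wAct_sub (n : ℕ) (σ : Equiv.Perm (Fin n)) (s : Fin n → ℤˣ) (u v : Wt n) :
    wAct n σ s (u - v) = wAct n σ s u - wAct n σ s v := by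
  rw [sub_eq_add_neg, wAct_add, wAct_neg, sub_eq_add_neg]

lemma wAct_oddRoot (n : ℕ) (τ : Equiv.Perm (Fin n)) (b : Fin n × Bool) :
    wAct n τ 1 (oddRoot n b) = oddRoot n (τ b.1, b.2) := by
  rcases b with ⟨i, s⟩
  cases s <;>
    simp only [oddRoot, wAct_add, wAct_sub, wAct_eps, wAct_delta, Bool.false_eq_true, if_false,
      if_true]

/-- The swap `(j, j1)` (with trivial signs) as an additive equivalence of the weight lattice. -/
def tauE (n : ℕ) (j j1 : Fin n) : Wt n ≃+ Wt n where
  toFun := wAct n (Equiv.swap j j1) 1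
  invFun := wAct n (Equiv.swap j j1) 1
  left_inv := fun v => Prod.ext rfl (funext fun i => by
    rw [wAct_apply2, wAct_apply2, Equiv.swap_inv, Equiv.swap_apply_self])
  right_inv := fun v => Prod.ext rfl (funext fun i => by
    rw [wAct_apply2, wAct_apply2, Equiv.swap_inv, Equiv.swap_apply_self])
  map_add' := wAct_add n _ 1

lemma mapDomain_eq_domCongr (n : ℕ) (j j1 : Fin n) (g : GA n) :
    AddMonoidAlgebra.mapDomain (wAct n (Equiv.swap j j1) 1) g
      = AddMonoidAlgebra.domCongr ℂ ℂ (tauE n j j1) g := by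
  rw [show wAct n (Equiv.swap j j1) 1 = ⇑(tauE n j j1).toEquiv from rfl]
  ext x; simp [← Finsupp.equivMapDomain_eq_mapDomain, Finsupp.equivMapDomain_apply]
  exact Finsupp.mapDomain_equiv_apply (f := (tauE n j j1).toEquiv) g.coeff x

lemma eWt_mul (n : ℕ) (u v : Wt n) : eWt n u * eWt n v = eWt n (u + v) := by
  simp [eWt, AddMonoidAlgebra.single_mul_single]

lemma domCongr_eWt (n : ℕ) (j j1 : Fin n) (v : Wt n) :
    AddMonoidAlgebra.domCongr ℂ ℂ (tauE n j j1) (eWt n v) = eWt n (tauE n j j1 v) := by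
  unfold eWt; rw [AddMonoidAlgebra.domCongr_single]

lemma domCongr_factor (n : ℕ) (j j1 : Fin n) (b : Fin n × Bool) :
    AddMonoidAlgebra.domCongr ℂ ℂ (tauE n j j1) (1 - eWt n (-(oddRoot n b)))
      = 1 - eWt n (-(oddRoot n (Equiv.swap j j1 b.1, b.2))) := by
  rw [map_sub, map_one]
  unfold eWt
  rw [AddMonoidAlgebra.domCongr_single]
  congr 2
  rw [show (tauE n j j1) (-(oddRoot n b)) = wAct n (Equiv.swap j j1) 1 (-(oddRoot n b)) from rfl,
    wAct_neg, wAct_oddRoot]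

lemma swap_pair_eq_iff (n : ℕ) (j j1 x y : Fin n) (s t : Bool) :
    ((Equiv.swap j j1 x, s) = ((y, t) : Fin n × Bool)) ↔ (x, s) = ((Equiv.swap j j1 y, t) : Fin n × Bool) := by
  rw [Prod.mk.injEq, Prod.mk.injEq]
  constructor
  · rintro ⟨h, ht⟩; exact ⟨by rw [← h, Equiv.swap_apply_self], ht⟩
  · rintro ⟨h, ht⟩; exact ⟨by rw [h, Equiv.swap_apply_self], ht⟩


/-- If `(χ+ρ, ε+δ_j) = (χ+ρ, ε+δ_{j+1}) = 0` then
`{K^{ε+δ_j}_χ} = −{K^{ε+δ_{j+1}}_{χ−ε−δ_{j+1}}}`. -/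
theorem alt_Kal_shift (n : ℕ) (χ : Wt n) (j j1 : Fin n)
    (hj1 : (j1 : ℕ) = (j : ℕ) + 1)
    (h1 : pairPlus n (χ + rho n) j = 0)
    (h2 : pairPlus n (χ + rho n) j1 = 0) :
    alt n (Kal n χ (j, true)) = - alt n (Kal n (χ - eps n - delta n j1) (j1, true)) := by
  classical
  have hne : j ≠ j1 := fun h => by rw [h] at hj1; omega
  -- coordinate facts
  have hμ2 : (χ + rho0 n).2 j = (χ + rho0 n).2 j1 := by
    simp only [pairPlus, rho, Prod.fst_add, Prod.snd_add, Pi.add_apply] at h1 h2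
    simp only [rho0, Prod.snd_add, Pi.add_apply]
    omega
  have hν2 : ((χ + rho0 n) - eps n - eps n - delta n j - delta n j1).2 j
      = ((χ + rho0 n) - eps n - eps n - delta n j - delta n j1).2 j1 := by
    simp only [Prod.snd_sub, Pi.sub_apply, eps, delta, Pi.zero_apply]
    simp only [if_true, if_neg hne, if_neg hne.symm]
    omega
  -- memberships
  have hmem1 : ((j1, true) : Fin n × Bool) ∈ (Finset.univ.erase ((j, true) : Fin n × Bool)) :=
    Finset.mem_erase.mpr ⟨by simp [hne.symm], Finset.mem_univ _⟩
  have hmem2 : ((j, true) : Fin n × Bool) ∈ (Finset.univ.erase ((j1, true) : Fin n × Bool)) :=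
    Finset.mem_erase.mpr ⟨by simp [hne], Finset.mem_univ _⟩
  -- decompose the two K's
  have hK1 : Kal n χ (j, true) = eWt n (χ + rho0 n) *
      ((1 - eWt n (-(oddRoot n (j1, true)))) *
        ∏ b ∈ (Finset.univ.erase ((j, true) : Fin n × Bool)).erase (j1, true),
          (1 - eWt n (-(oddRoot n b)))) := by
    unfold Kal
    rw [← Finset.mul_prod_erase _ _ hmem1]
  have hK2 : Kal n (χ - eps n - delta n j1) (j1, true)
      = eWt n ((χ + rho0 n) - eps n - delta n j1) *
        ((1 - eWt n (-(oddRoot n (j, true)))) *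
          ∏ b ∈ (Finset.univ.erase ((j, true) : Fin n × Bool)).erase (j1, true),
            (1 - eWt n (-(oddRoot n b)))) := by
    unfold Kal
    rw [show (χ - eps n - delta n j1) + rho0 n = (χ + rho0 n) - eps n - delta n j1 from by abel,
      ← Finset.mul_prod_erase _ _ hmem2, Finset.erase_right_comm]
  -- the sum
  have hsum : Kal n χ (j, true) + Kal n (χ - eps n - delta n j1) (j1, true)
      = (eWt n (χ + rho0 n)
          - eWt n ((χ + rho0 n) - eps n - eps n - delta n j - delta n j1)) *
        ∏ b ∈ (Finset.univ.erase ((j, true) : Fin n × Bool)).erase (j1, true),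
          (1 - eWt n (-(oddRoot n b))) := by
    rw [hK1, hK2, ← mul_assoc, ← mul_assoc, ← add_mul]
    congr 1
    rw [mul_sub, mul_one, mul_sub, mul_one, eWt_mul, eWt_mul,
      show (χ + rho0 n) + -(oddRoot n ((j1 : Fin n), true)) = (χ + rho0 n) - eps n - delta n j1
        from by rw [show oddRoot n ((j1 : Fin n), true) = eps n + delta n j1 from rfl]; abel,
      show ((χ + rho0 n) - eps n - delta n j1) + -(oddRoot n ((j : Fin n), true))
          = (χ + rho0 n) - eps n - eps n - delta n j - delta n j1
        from by rw [show oddRoot n ((j : Fin n), true) = eps n + delta n j from rfl]; abel]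
    abel
  -- invariance of the symmetric part
  have hFfix : AddMonoidAlgebra.mapDomain (wAct n (Equiv.swap j j1) 1)
      ((eWt n (χ + rho0 n)
          - eWt n ((χ + rho0 n) - eps n - eps n - delta n j - delta n j1)) *
        ∏ b ∈ (Finset.univ.erase ((j, true) : Fin n × Bool)).erase (j1, true),
          (1 - eWt n (-(oddRoot n b))))
      = (eWt n (χ + rho0 n)
          - eWt n ((χ + rho0 n) - eps n - eps n - delta n j - delta n j1)) *
        ∏ b ∈ (Finset.univ.erase ((j, true) : Fin n × Bool)).erase (j1, true),
          (1 - eWt n (-(oddRoot n b))) := by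
    rw [mapDomain_eq_domCongr, map_mul, map_sub, domCongr_eWt, domCongr_eWt,
      show (tauE n j j1) (χ + rho0 n) = χ + rho0 n from wAct_swap_fix n j j1 _ hμ2,
      show (tauE n j j1) ((χ + rho0 n) - eps n - eps n - delta n j - delta n j1)
          = (χ + rho0 n) - eps n - eps n - delta n j - delta n j1
        from wAct_swap_fix n j j1 _ hν2]
    congr 1
    rw [map_prod]
    rw [Finset.prod_congr rfl (fun b _ => domCongr_factor n j j1 b)]
    refine Finset.prod_nbij' (fun b => (Equiv.swap j j1 b.1, b.2))
      (fun b => (Equiv.swap j j1 b.1, b.2)) ?_ ?_ ?_ ?_ ?_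
    · rintro ⟨b1, b2⟩ hb
      rw [Finset.mem_erase, Finset.mem_erase] at hb ⊢
      refine ⟨?_, ?_, Finset.mem_univ _⟩
      · intro hEq
        rw [swap_pair_eq_iff, Equiv.swap_apply_right] at hEq
        exact hb.2.1 hEq
      · intro hEq
        rw [swap_pair_eq_iff, Equiv.swap_apply_left] at hEq
        exact hb.1 hEq
    · rintro ⟨b1, b2⟩ hb
      rw [Finset.mem_erase, Finset.mem_erase] at hb ⊢
      refine ⟨?_, ?_, Finset.mem_univ _⟩
      · intro hEq
        rw [swap_pair_eq_iff, Equiv.swap_apply_right] at hEq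
        exact hb.2.1 hEq
      · intro hEq
        rw [swap_pair_eq_iff, Equiv.swap_apply_left] at hEq
        exact hb.1 hEq
    · intro a _; exact Prod.ext (Equiv.swap_apply_self _ _ _) rfl
    · intro a _; exact Prod.ext (Equiv.swap_apply_self _ _ _) rfl
    · intro a _; rfl
  -- conclude
  have hFzero : alt n ((eWt n (χ + rho0 n)
          - eWt n ((χ + rho0 n) - eps n - eps n - delta n j - delta n j1)) *
        ∏ b ∈ (Finset.univ.erase ((j, true) : Fin n × Bool)).erase (j1, true),
          (1 - eWt n (-(oddRoot n b)))) = 0 :=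
    alt_eq_zero_of_swap_fixed n j j1 hne _ hFfix
  have hadd : alt n (Kal n χ (j, true))
      + alt n (Kal n (χ - eps n - delta n j1) (j1, true)) = 0 := by
    rw [← alt_add, hsum]; exact hFzero
  exact eq_neg_of_add_eq_zero_left hadd
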